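/- Assume Schanuel's conjecture. Then for all complex numbers α₁, …, αₙ, the transcendence degree over ℚ of the field ℚ(α₁, …, αₙ, sin α₁, …, sin αₙ) is at least the dimension of the ℚ-linear span of α₁, …, αₙ in ℂ. -/

import Mathlib

/-- The dimension of the `ℚ`-linear span of a finite family of complex numbers. -/
noncomputable def qLinDim {n : ℕ} (α : Fin n → ℂ) : ℕ :=
  Module.finrank ℚ (Submodule.span ℚ (Set.range α))

/-- **Schanuel's conjecture**: for all complex numbers `α₁, …, αₙ`, the
transcendence degree over `ℚ` of `ℚ(α₁, …, αₙ, exp α₁, …, exp αₙ)` is at least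
the dimension of the `ℚ`-linear span of `α₁, …, αₙ`.  Since this field is
generated by the family `(αᵢ)ᵢ ⊔ (exp αᵢ)ᵢ`, its transcendence degree is the
maximal cardinality of an algebraically independent subfamily of the
generators, so the inequality is expressed by the existence of an
algebraically independent subfamily of the generators of the right size. -/
def SchanuelConjecture : Prop :=
  ∀ (n : ℕ) (α : Fin n → ℂ),
    ∃ s : Finset (Fin n ⊕ Fin n),
      s.card = qLinDim α ∧
      AlgebraicIndependent ℚ
        (fun i : s => Sum.elim α (fun j => Complex.exp (α j)) (i : Fin n ⊕ Fin n))

section Helpers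

open IntermediateField Polynomial

lemma mem_isAlgebraic (K : IntermediateField ℚ ℂ) {x : ℂ} (hx : x ∈ K) :
    IsAlgebraic K x := isAlgebraic_algebraMap (⟨x, hx⟩ : K)

lemma isAlgebraic_le {K L : IntermediateField ℚ ℂ} (h : K ≤ L) {x : ℂ}
    (hx : IsAlgebraic K x) : IsAlgebraic L x := by
  obtain ⟨p, hp, hpx⟩ := hx
  refine ⟨p.map (IntermediateField.inclusion h), Polynomial.map_ne_zero hp, ?_⟩
  rw [Polynomial.aeval_def, Polynomial.eval₂_map]
  exact hpx

lemma isAlgebraic_mono {S T : Set ℂ} (h : S ⊆ T) {x : ℂ}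
    (hx : IsAlgebraic (adjoin ℚ S) x) : IsAlgebraic (adjoin ℚ T) x :=
  isAlgebraic_le (IntermediateField.adjoin.mono _ _ _ h) hx

/-- Transitivity: if `x` is algebraic over `ℚ(T)` and every element of `T` is algebraic
over `ℚ(S)`, then `x` is algebraic over `ℚ(S)`. -/
lemma isAlgebraic_trans_set {S T : Set ℂ}
    (hT : ∀ y ∈ T, IsAlgebraic (adjoin ℚ S) y) {x : ℂ}
    (hx : IsAlgebraic (adjoin ℚ T) x) : IsAlgebraic (adjoin ℚ S) x := by
  set K : IntermediateField ℚ ℂ := adjoin ℚ S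
  set E : IntermediateField K ℂ := adjoin K T
  haveI : Algebra.IsAlgebraic K E :=
    IntermediateField.isAlgebraic_adjoin fun y hy => (isAlgebraic_iff_isIntegral).mp (hT y hy)
  have hle : adjoin ℚ T ≤ IntermediateField.restrictScalars ℚ E :=
    IntermediateField.adjoin_le_iff.mpr fun y hy => IntermediateField.subset_adjoin K T hy
  have hx' : IsAlgebraic (IntermediateField.restrictScalars ℚ E) x := isAlgebraic_le hle hx
  have hx'' : IsAlgebraic E x := hx'
  rw [isAlgebraic_iff_isIntegral] at hx'' ⊢
  haveI : Algebra.IsIntegral K E := Algebra.isAlgebraic_iff_isIntegral.mp ‹_›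
  exact isIntegral_trans x hx''

/-- `x` algebraic over the field `ℚ(S)` implies `x` algebraic over the ring `ℚ[S]`. -/
lemma isAlgebraic_algAdjoin_of_adjoin {S : Set ℂ} {x : ℂ}
    (hx : IsAlgebraic (adjoin ℚ S) x) : IsAlgebraic (Algebra.adjoin ℚ S) x := by
  set R : Subalgebra ℚ ℂ := Algebra.adjoin ℚ S
  set K : IntermediateField ℚ ℂ := adjoin ℚ S
  have hsub : ∀ y, y ∈ R → y ∈ K := fun y hy =>
    IntermediateField.algebra_adjoin_le_adjoin ℚ S hy
  letI : Algebra R K := RingHom.toAlgebra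
    { toFun := fun y => ⟨y.1, hsub y.1 y.2⟩
      map_one' := rfl
      map_mul' := fun _ _ => rfl
      map_zero' := rfl
      map_add' := fun _ _ => rfl }
  haveI : IsScalarTower R K ℂ := IsScalarTower.of_algebraMap_eq fun y => rfl
  haveI : IsFractionRing R K := by
    constructor
    constructor
    · rintro ⟨y, hy⟩
      have hy0 : (y : ℂ) ≠ 0 := by
        intro h0
        have : (y : R) = 0 := Subtype.ext h0
        exact (mem_nonZeroDivisors_iff_ne_zero.mp hy) this
      exact isUnit_iff_ne_zero.mpr (fun h => hy0 (congrArg Subtype.val h))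
    · rintro ⟨z, hz⟩
      obtain ⟨r, s, hrs⟩ := (IntermediateField.mem_adjoin_iff ℚ z).mp hz
      have hr : MvPolynomial.aeval (Subtype.val : S → ℂ) r ∈ R := by
        have := Algebra.adjoin_range_eq_range_aeval ℚ (Subtype.val : S → ℂ)
        rw [Subtype.range_coe] at this
        rw [show R = Algebra.adjoin ℚ S from rfl, this]
        exact ⟨r, rfl⟩
      have hs : MvPolynomial.aeval (Subtype.val : S → ℂ) s ∈ R := by
        have := Algebra.adjoin_range_eq_range_aeval ℚ (Subtype.val : S → ℂ)
        rw [Subtype.range_coe] at this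
        rw [show R = Algebra.adjoin ℚ S from rfl, this]
        exact ⟨s, rfl⟩
      by_cases h0 : MvPolynomial.aeval (Subtype.val : S → ℂ) s = 0
      · refine ⟨⟨0, 1⟩, ?_⟩
        have : z = 0 := by rw [hrs, h0, div_zero]
        apply Subtype.ext
        show z * (1 : ℂ) = (0 : ℂ)
        rw [this, zero_mul]
      · refine ⟨⟨⟨_, hr⟩, ⟨⟨_, hs⟩, mem_nonZeroDivisors_of_ne_zero (fun h => h0 (congrArg Subtype.val h))⟩⟩, ?_⟩
        apply Subtype.ext
        show z * MvPolynomial.aeval (Subtype.val : S → ℂ) s = MvPolynomial.aeval (Subtype.val : S → ℂ) r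
        rw [hrs, div_mul_cancel₀ _ h0]
    · intro y y' h
      refine ⟨1, Subtype.ext ?_⟩
      have h2 : (y : ℂ) = (y' : ℂ) := congrArg (fun a : K => (a : ℂ)) h
      show ((1 : R) : ℂ) * (y : ℂ) = ((1 : R) : ℂ) * (y' : ℂ)
      rw [h2]
  exact (IsFractionRing.isAlgebraic_iff R K ℂ).mpr hx

lemma isAlgebraic_I : IsAlgebraic ℚ Complex.I := by
  refine ⟨X ^ 2 + 1, ?_, ?_⟩
  · intro h
    simpa [Polynomial.coeff_one] using congrArg (fun p => Polynomial.coeff p 2) h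
  · simp [Complex.I_sq]

/-- Transfer of algebraic independence along pointwise mutual algebraicity (modulo `I`). -/
lemma transfer {ι : Type} (f g : ι → ℂ)
    (hf : AlgebraicIndependent ℚ f)
    (hfg : ∀ i, IsAlgebraic (adjoin ℚ {g i, Complex.I}) (f i))
    (hgf : ∀ i, IsAlgebraic (adjoin ℚ {f i, Complex.I}) (g i)) :
    AlgebraicIndependent ℚ g := by
  refine algebraicIndependent_of_finite_type' ((algebraMap ℚ ℂ).injective) fun t _ _ i hit => ?_
  by_contra hcon
  rw [Transcendental, not_not] at hcon
  -- `f i` is transcendental over `ℚ[f '' t]`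
  have htrans : Transcendental (Algebra.adjoin ℚ (f '' t)) (f i) := by
    have h1 : AlgebraicIndependent ℚ (fun j : t => f j) :=
      hf.comp _ Subtype.val_injective
    have h2 : AlgebraicIndependent ℚ
        (fun o : Option t => o.elim (f i) (fun j : t => f j)) := by
      have he : (fun o : Option t => o.elim (f i) (fun j : t => f j)) =
          f ∘ (fun o : Option t => o.elim i Subtype.val) := by
        funext o; cases o <;> rfl
      rw [he]
      refine hf.comp _ ?_
      rintro (_ | ⟨a, ha⟩) (_ | ⟨b, hb⟩) h
      · rfl
      · exact absurd (show i ∈ t from (show i = b from h) ▸ hb) hit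
      · exact absurd (show i ∈ t from (show a = i from h) ▸ ha) hit
      · simpa [Subtype.ext_iff] using h
    have := (h1.option_iff_transcendental (f i)).mp h2
    rwa [← Set.image_eq_range] at this
  apply htrans
  apply isAlgebraic_algAdjoin_of_adjoin
  -- the chain of algebraicity
  have hIA : IsAlgebraic (adjoin ℚ (f '' t)) Complex.I := isAlgebraic_I.tower_top (adjoin ℚ (f '' t))
  have hstep : ∀ y ∈ f '' t ∪ {Complex.I}, IsAlgebraic (adjoin ℚ (f '' t)) y := by
    rintro y (hy | hy)
    · exact mem_isAlgebraic _ (IntermediateField.subset_adjoin ℚ _ hy)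
    · rw [Set.mem_singleton_iff] at hy; rw [hy]; exact hIA
  have hBalg : ∀ y ∈ g '' t, IsAlgebraic (adjoin ℚ (f '' t)) y := by
    rintro y ⟨j, hj, rfl⟩
    refine isAlgebraic_trans_set hstep (isAlgebraic_mono ?_ (hgf j))
    rintro z (hz | hz)
    · exact Or.inl ⟨j, hj, hz.symm⟩
    · exact Or.inr hz
  have hcon' : IsAlgebraic (adjoin ℚ (g '' t)) (g i) := by
    have := hcon.tower_top_of_subalgebra_le
      (B := (adjoin ℚ (g '' t)).toSubalgebra)
      (IntermediateField.algebra_adjoin_le_adjoin ℚ _)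
    exact this
  have hgi : IsAlgebraic (adjoin ℚ (f '' t)) (g i) :=
    isAlgebraic_trans_set hBalg hcon'
  -- finally f i
  refine isAlgebraic_trans_set (T := f '' t ∪ {g i, Complex.I}) ?_
    (isAlgebraic_mono (by intro z hz; exact Or.inr hz) (hfg i))
  rintro y (hy | hy | hy)
  · exact mem_isAlgebraic _ (IntermediateField.subset_adjoin ℚ _ hy)
  · rw [hy]; exact hgi
  · rw [Set.mem_singleton_iff] at hy; rw [hy]; exact hIA

noncomputable def mulI : ℂ ≃ₗ[ℚ] ℂ where
  toFun := fun z => Complex.I * z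
  map_add' := fun a b => mul_add _ _ _
  map_smul' := fun r z => by simp only [Algebra.smul_def, RingHom.id_apply]; ring
  invFun := fun z => -Complex.I * z
  left_inv := fun z => by
    show -Complex.I * (Complex.I * z) = z
    rw [← mul_assoc, neg_mul, Complex.I_mul_I, neg_neg, one_mul]
  right_inv := fun z => by
    show Complex.I * (-Complex.I * z) = z
    rw [← mul_assoc, mul_neg, Complex.I_mul_I, neg_neg, one_mul]

lemma qLinDim_mulI {n : ℕ} (α : Fin n → ℂ) :
    Module.finrank ℚ (Submodule.span ℚ (Set.range (fun j => Complex.I * α j)))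
      = Module.finrank ℚ (Submodule.span ℚ (Set.range α)) := by
  have h1 : Set.range (fun j => Complex.I * α j) = mulI '' Set.range α := by
    rw [← Set.range_comp]; rfl
  rw [h1, ← LinearEquiv.coe_coe, ← Submodule.map_span]
  exact LinearEquiv.finrank_map_eq mulI _

lemma exp_I_mul_isAlgebraic (a : ℂ) :
    IsAlgebraic (adjoin ℚ {Complex.sin a, Complex.I}) (Complex.exp (Complex.I * a)) := by
  set K := adjoin ℚ ({Complex.sin a, Complex.I} : Set ℂ)
  have hs : Complex.sin a ∈ K := IntermediateField.subset_adjoin ℚ _ (by left; rfl)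
  have hI : Complex.I ∈ K := IntermediateField.subset_adjoin ℚ _ (by right; rfl)
  have hc : (2 * Complex.I * Complex.sin a) ∈ K := by
    exact mul_mem (mul_mem (by
      have := K.algebraMap_mem (2 : ℚ)
      simpa using this) hI) hs
  refine ⟨X ^ 2 - Polynomial.C (⟨_, hc⟩ : K) * X - 1, ?_, ?_⟩
  · intro h
    have := congrArg (fun p => Polynomial.coeff p 2) h
    simp [Polynomial.coeff_one] at this
  · have key : Complex.exp (Complex.I * a) ^ 2
        - (2 * Complex.I * Complex.sin a) * Complex.exp (Complex.I * a) - 1 = 0 := by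
      rw [mul_comm Complex.I a, Complex.exp_mul_I]
      linear_combination Complex.sin_sq_add_cos_sq a - Complex.sin a ^ 2 * Complex.I_sq
    simpa using key

lemma sin_mem_adjoin (a : ℂ) :
    Complex.sin a ∈ adjoin ℚ ({Complex.exp (Complex.I * a), Complex.I} : Set ℂ) := by
  set K := adjoin ℚ ({Complex.exp (Complex.I * a), Complex.I} : Set ℂ)
  have hz : Complex.exp (Complex.I * a) ∈ K := IntermediateField.subset_adjoin ℚ _ (by left; rfl)
  have hI : Complex.I ∈ K := IntermediateField.subset_adjoin ℚ _ (by right; rfl)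
  have hzinv : (Complex.exp (Complex.I * a))⁻¹ = Complex.cos a - Complex.sin a * Complex.I := by
    rw [← Complex.exp_neg, show -(Complex.I * a) = (-a) * Complex.I by ring,
      Complex.exp_mul_I, Complex.cos_neg, Complex.sin_neg]
    ring
  have hid : Complex.sin a =
      (Complex.exp (Complex.I * a) - (Complex.exp (Complex.I * a))⁻¹) * (2 * Complex.I)⁻¹ := by
    rw [hzinv, mul_comm Complex.I a, Complex.exp_mul_I]
    have h2I : (2 : ℂ) * Complex.I ≠ 0 := by
      simp [Complex.I_ne_zero]
    field_simp
    ring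
  rw [hid]
  exact mul_mem (sub_mem hz (inv_mem hz)) (inv_mem (mul_mem (by
    have := K.algebraMap_mem (2 : ℚ); simpa using this) hI))

end Helpers

/-- **Schanuel's conjecture for sine** (Fact 2.4).  Assuming Schanuel's
conjecture, for all complex `α₁, …, αₙ` the transcendence degree over `ℚ` of
`ℚ(α₁, …, αₙ, sin α₁, …, sin αₙ)` is at least the dimension of the `ℚ`-linear
span of `α₁, …, αₙ`. -/
theorem schanuel_sine (schanuel : SchanuelConjecture) (n : ℕ) (α : Fin n → ℂ) :
    ∃ s : Finset (Fin n ⊕ Fin n),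
      s.card = qLinDim α ∧
      AlgebraicIndependent ℚ
        (fun i : s => Sum.elim α (fun j => Complex.sin (α j)) (i : Fin n ⊕ Fin n)) := by
  obtain ⟨s, hcard, hindep⟩ := schanuel n (fun j => Complex.I * α j)
  refine ⟨s, ?_, ?_⟩
  · rw [hcard]
    exact qLinDim_mulI α
  · refine transfer
      (fun i : s => Sum.elim (fun j => Complex.I * α j)
        (fun j => Complex.exp (Complex.I * α j)) (i : Fin n ⊕ Fin n))
      (fun i : s => Sum.elim α (fun j => Complex.sin (α j)) (i : Fin n ⊕ Fin n))
      hindep ?_ ?_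
    · rintro ⟨(j | j), hk⟩
      · exact mem_isAlgebraic _
          (mul_mem (IntermediateField.subset_adjoin ℚ _ (by right; rfl))
            (IntermediateField.subset_adjoin ℚ _ (by left; rfl)))
      · exact exp_I_mul_isAlgebraic (α j)
    · rintro ⟨(j | j), hk⟩
      · refine mem_isAlgebraic _ ?_
        have h : α j = -Complex.I * (Complex.I * α j) := by
          rw [← mul_assoc, neg_mul, Complex.I_mul_I, neg_neg, one_mul]
        show α j ∈ _
        rw [h]
        exact mul_mem (neg_mem (IntermediateField.subset_adjoin ℚ _ (by right; rfl)))
          (IntermediateField.subset_adjoin ℚ _ (by left; rfl))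
      · exact mem_isAlgebraic _ (sin_mem_adjoin (α j))
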